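/- arXiv:0801.3025 — 2 statements merged into one kernel-verified Lean document; each statement's English description precedes it below -/
import Mathlib

section
/- For every i with 0 ≤ i ≤ s, the linear subspace 𝔫_i = span_K{y_η : η ∈ A_i} is a Lie subalgebra of 𝔫 (and hence ℒ_i = 𝔫_i/𝔪 is a Lie subalgebra of ℒ). Equivalently, in purely combinatorial terms: if (a,b) ∈ B_i and (b,c) ∈ B_i with a > b > c, then (a,c) ∈ B_i ⊔ M. -/
open Finset MvPolynomial

namespace Panov

/-- The set `A` of places `(i,j)` with `n ≥ i > j ≥ 1`. -/
def placesA (n : ℕ) : Finset (ℕ × ℕ) :=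
  (Finset.range (n + 1) ×ˢ Finset.range (n + 1)).filter fun p => 1 ≤ p.2 ∧ p.2 < p.1

/-- The rank of a place in the linear order `≻`:
`η ≻ ζ` iff `ordA n η < ordA n ζ`. -/
def ordA (n : ℕ) (p : ℕ × ℕ) : ℕ := p.2 * (n + 1) + (n - p.1)

/-- The `≻`-greatest element of a (nonempty) set `B` of places:
the element with the minimal value of `ordA`. -/
def xiOf (n : ℕ) (B : Finset (ℕ × ℕ)) : ℕ × ℕ :=
  let m := WithTop.untopD 0 ((B.image (ordA n)).min)
  (n - m % (n + 1), m / (n + 1))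

/-- The places that get the symbol `−` at the current step, when the
current set of unfilled places is `B`. -/
def minusSet (n : ℕ) (B : Finset (ℕ × ℕ)) : Finset (ℕ × ℕ) :=
  B.filter fun p =>
    p.1 = (xiOf n B).1 ∧ (xiOf n B).2 < p.2 ∧ p.2 < (xiOf n B).1 ∧ (p.2, (xiOf n B).2) ∈ B

/-- The places that get the symbol `+` at the current step. -/
def plusSet (n : ℕ) (B : Finset (ℕ × ℕ)) : Finset (ℕ × ℕ) :=
  B.filter fun p =>
    p.2 = (xiOf n B).2 ∧ (xiOf n B).2 < p.1 ∧ p.1 < (xiOf n B).1 ∧ ((xiOf n B).1, p.1) ∈ B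

/-- `Bset n M i` is the set of places unfilled after step `i` of the diagram. -/
def Bset (n : ℕ) (M : Finset (ℕ × ℕ)) : ℕ → Finset (ℕ × ℕ)
  | 0 => placesA n \ M
  | i + 1 =>
      Bset n M i \
        insert (xiOf n (Bset n M i)) (minusSet n (Bset n M i) ∪ plusSet n (Bset n M i))

/-- `ξ_i`, the place that receives `⊗` at step `i ≥ 1`. -/
def xiStep (n : ℕ) (M : Finset (ℕ × ℕ)) (i : ℕ) : ℕ × ℕ := xiOf n (Bset n M (i - 1))

/-- `C_i⁻`, the places filled with `−` at step `i ≥ 1`. -/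
def Cminus (n : ℕ) (M : Finset (ℕ × ℕ)) (i : ℕ) : Finset (ℕ × ℕ) :=
  minusSet n (Bset n M (i - 1))

/-- `C_i⁺`, the places filled with `+` at step `i ≥ 1`. -/
def Cplus (n : ℕ) (M : Finset (ℕ × ℕ)) (i : ℕ) : Finset (ℕ × ℕ) :=
  plusSet n (Bset n M (i - 1))

/-- `M ⊆ A` spans an ideal `𝔪` of `𝔫 = ut(n,K)`. -/
def IsIdealSet (n : ℕ) (M : Finset (ℕ × ℕ)) : Prop :=
  M ⊆ placesA n ∧
    (∀ p ∈ M, ∀ d, 1 ≤ d → d < p.2 → (p.1, d) ∈ M) ∧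
    (∀ p ∈ M, ∀ c, p.1 < c → c ≤ n → (c, p.2) ∈ M)

/-- `s` is the number of steps after which the diagram is complete. -/
def IsNumSteps (n : ℕ) (M : Finset (ℕ × ℕ)) (s : ℕ) : Prop :=
  Bset n M s = ∅ ∧ ∀ j < s, (Bset n M j).Nonempty


lemma Bset_subset (n : ℕ) (M : Finset (ℕ × ℕ)) (i : ℕ) :
    Bset n M i ⊆ placesA n \ M := by
  induction i with
  | zero => exact Finset.Subset.refl _
  | succ i ih => exact (Finset.sdiff_subset).trans ih

lemma xiOf_mem (n : ℕ) (B : Finset (ℕ × ℕ)) (hB : B.Nonempty) (hsub : B ⊆ placesA n) :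
    xiOf n B ∈ B := by
  obtain ⟨q, hq, hmin⟩ := Finset.exists_min_image B (ordA n) hB
  have hmem : q ∈ placesA n := hsub hq
  simp only [placesA, Finset.mem_filter, Finset.mem_product, Finset.mem_range] at hmem
  have hq1 : q.1 ≤ n := Nat.lt_succ_iff.mp hmem.1.1
  have hminEq : (B.image (ordA n)).min = (ordA n q : WithTop ℕ) := by
    apply le_antisymm
    · exact Finset.min_le (Finset.mem_image_of_mem _ hq)
    · apply Finset.le_min
      intro y hy
      obtain ⟨p, hp, rfl⟩ := Finset.mem_image.mp hy
      exact WithTop.coe_le_coe.mpr (hmin p hp)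
  have huntop : WithTop.untopD 0 ((B.image (ordA n)).min) = ordA n q := by
    rw [hminEq]; rfl
  have hlt : n - q.1 < n + 1 := Nat.lt_succ_of_le (Nat.sub_le _ _)
  have hmod : ordA n q % (n + 1) = n - q.1 := by
    unfold ordA
    rw [Nat.add_comm, Nat.add_mul_mod_self_right, Nat.mod_eq_of_lt hlt]
  have hdiv : ordA n q / (n + 1) = q.2 := by
    unfold ordA
    rw [Nat.add_comm, Nat.add_mul_div_right _ _ (Nat.succ_pos n), Nat.div_eq_of_lt hlt, Nat.zero_add]
  show ((n - WithTop.untopD 0 ((B.image (ordA n)).min) % (n + 1),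
      WithTop.untopD 0 ((B.image (ordA n)).min) / (n + 1)) : ℕ × ℕ) ∈ B
  rw [huntop, hmod, hdiv, Nat.sub_sub_self hq1]
  exact hq

lemma lemma1_aux (n s : ℕ) (M : Finset (ℕ × ℕ))
    (hM : IsIdealSet n M) (hs : IsNumSteps n M s) :
    ∀ i ≤ s, ∀ a b c : ℕ, b < a → c < b →
      (a, b) ∈ Bset n M i → (b, c) ∈ Bset n M i → (a, c) ∈ Bset n M i ∪ M := by
  intro i
  induction i with
  | zero =>
    intro _ a b c hab hbc h1 h2
    simp only [Bset, Finset.mem_sdiff, Finset.mem_union] at h1 h2 ⊢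
    by_cases hM' : (a, c) ∈ M
    · exact Or.inr hM'
    · refine Or.inl ⟨?_, hM'⟩
      simp only [placesA, Finset.mem_filter, Finset.mem_product, Finset.mem_range] at h1 h2 ⊢
      exact ⟨⟨h1.1.1.1, h2.1.1.2⟩, h2.1.2.1, lt_trans hbc hab⟩
  | succ i ih =>
    intro hi a b c hab hbc h1 h2
    have hi' : i ≤ s := Nat.le_of_succ_le hi
    have hne : (Bset n M i).Nonempty := hs.2 i (Nat.lt_of_succ_le hi)
    have hsub : Bset n M i ⊆ placesA n \ M := Bset_subset n M i
    have hsubA : Bset n M i ⊆ placesA n := hsub.trans Finset.sdiff_subset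
    have hxi : xiOf n (Bset n M i) ∈ Bset n M i := xiOf_mem n _ hne hsubA
    set ξ := xiOf n (Bset n M i) with hξ
    simp only [Bset, Finset.mem_sdiff, Finset.mem_insert, Finset.mem_union] at h1 h2
    obtain ⟨h1', h1n⟩ := h1
    obtain ⟨h2', h2n⟩ := h2
    have hac := ih hi' a b c hab hbc h1' h2'
    rcases Finset.mem_union.mp hac with hacB | hacM
    swap
    · exact Finset.mem_union_right _ hacM
    apply Finset.mem_union_left
    simp only [Bset, Finset.mem_sdiff, Finset.mem_insert, Finset.mem_union]
    refine ⟨hacB, ?_⟩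
    push_neg at h1n h2n ⊢
    -- bounds
    have hmemab : (a, b) ∈ placesA n := hsubA h1'
    have hmembc : (b, c) ∈ placesA n := hsubA h2'
    simp only [placesA, Finset.mem_filter, Finset.mem_product, Finset.mem_range] at hmemab hmembc
    have han : a ≤ n := Nat.lt_succ_iff.mp hmemab.1.1
    have hc1 : 1 ≤ c := hmembc.2.1
    have hxinM : ξ ∉ M := (Finset.mem_sdiff.mp (hsub hxi)).2
    refine ⟨?_, ?_, ?_⟩
    · -- (a,c) ≠ ξ
      intro heq
      apply h1n.2.1
      simp only [minusSet, Finset.mem_filter]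
      refine ⟨h1', ?_, ?_, ?_, ?_⟩ <;> rw [← heq] <;> first
        | rfl
        | exact hbc
        | exact hab
        | exact h2'
    · -- (a,c) ∉ minusSet
      intro hm
      simp only [minusSet, Finset.mem_filter] at hm
      obtain ⟨_, hA1, hlt1, _, hctB⟩ := hm
      have hbt := ih hi' b c ξ.2 hbc hlt1 h2' hctB
      rcases Finset.mem_union.mp hbt with hbtB | hbtM
      · apply h1n.2.1
        simp only [minusSet, Finset.mem_filter]
        exact ⟨h1', hA1, lt_trans hlt1 hbc, hA1 ▸ hab, hbtB⟩
      · have : (a, ξ.2) ∈ M := hM.2.2 (b, ξ.2) hbtM a hab han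
        apply hxinM
        have : (ξ.1, ξ.2) ∈ M := hA1 ▸ this
        simpa using this
    · -- (a,c) ∉ plusSet
      intro hp
      simp only [plusSet, Finset.mem_filter] at hp
      obtain ⟨_, hC2, _, hlt2, hkaB⟩ := hp
      have hkb := ih hi' ξ.1 a b hlt2 hab hkaB h1'
      rcases Finset.mem_union.mp hkb with hkbB | hkbM
      · apply h2n.2.2
        simp only [plusSet, Finset.mem_filter]
        exact ⟨h2', hC2, hC2 ▸ hbc, lt_trans hab hlt2, hkbB⟩
      · have : (ξ.1, c) ∈ M := hM.2.1 (ξ.1, b) hkbM c hc1 hbc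
        apply hxinM
        have : (ξ.1, ξ.2) ∈ M := hC2 ▸ this
        simpa using this

/-- **Lemma 1** (combinatorial form).  For every `0 ≤ i ≤ s` the subspace
`𝔫_i = span{y_η : η ∈ A_i}` is a Lie subalgebra of `𝔫`; equivalently, if
`(a,b) ∈ B_i` and `(b,c) ∈ B_i` with `a > b > c`, then `(a,c) ∈ B_i ⊔ M`. -/
theorem lemma1_subalgebra (K : Type*) [Field K] [CharZero K]
    (n s : ℕ) (hn : 2 ≤ n) (M : Finset (ℕ × ℕ))
    (hM : IsIdealSet n M) (hs : IsNumSteps n M s)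
    (i : ℕ) (hi : i ≤ s)
    (a b c : ℕ) (hab : a > b) (hbc : b > c)
    (h1 : (a, b) ∈ Bset n M i) (h2 : (b, c) ∈ Bset n M i) :
    (a, c) ∈ Bset n M i ∪ M := by
  exact lemma1_aux n s M hM hs i hi a b c hab hbc h1 h2
end Panov
end

section
/- Let 1 ≤ i ≤ s. If (k,b) ∈ C_i⁻ and (a,k) ∈ C_l⁻ for some l < i (with a > k > b), then (a,b) ∈ C_m⁻ for some m < i. -/
open Finset MvPolynomial

namespace Panov

section Aux

variable {n : ℕ} {M : Finset (ℕ × ℕ)}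

lemma mem_placesA {p : ℕ × ℕ} : p ∈ placesA n ↔ p.1 ≤ n ∧ 1 ≤ p.2 ∧ p.2 < p.1 := by
  unfold placesA
  rw [Finset.mem_filter, Finset.mem_product, Finset.mem_range, Finset.mem_range]
  constructor
  · rintro ⟨⟨h1, h2⟩, h3, h4⟩; exact ⟨by omega, h3, h4⟩
  · rintro ⟨h1, h2, h3⟩; exact ⟨⟨by omega, by omega⟩, h2, h3⟩

lemma Bset_subset_placesA : ∀ m, Bset n M m ⊆ placesA n
  | 0 => Finset.sdiff_subset
  | (m + 1) => Finset.sdiff_subset.trans (Bset_subset_placesA m)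

lemma Bset_succ_subset (m : ℕ) : Bset n M (m + 1) ⊆ Bset n M m :=
  Finset.sdiff_subset

lemma Bset_antitone : ∀ {m m' : ℕ}, m ≤ m' → Bset n M m' ⊆ Bset n M m := by
  intro m m' h
  induction m' with
  | zero => have : m = 0 := by omega
            subst this; exact subset_rfl
  | succ m' ih =>
    rcases Nat.lt_or_ge m (m' + 1) with h' | h'
    · exact (Bset_succ_subset m').trans (ih (by omega))
    · have : m = m' + 1 := by omega
      subst this; exact subset_rfl

lemma not_mem_M_of_mem_Bset {p : ℕ × ℕ} {m : ℕ} (hp : p ∈ Bset n M m) : p ∉ M := by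
  have h0 : p ∈ Bset n M 0 := Bset_antitone (Nat.zero_le m) hp
  have : p ∈ placesA n \ M := h0
  exact (Finset.mem_sdiff.mp this).2

lemma ordA_lt_col {x₁ t₁ x₂ t₂ : ℕ} (h : t₁ < t₂) (hx : x₁ ≤ n) :
    ordA n (x₁, t₁) < ordA n (x₂, t₂) := by
  show t₁ * (n + 1) + (n - x₁) < t₂ * (n + 1) + (n - x₂)
  have h1 : t₁ * (n + 1) + (n - x₁) < (t₁ + 1) * (n + 1) := by
    have : (t₁ + 1) * (n + 1) = t₁ * (n + 1) + (n + 1) := by ring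
    omega
  have h2 : (t₁ + 1) * (n + 1) ≤ t₂ * (n + 1) := Nat.mul_le_mul_right _ h
  omega

lemma ordA_lt_row {x₁ x₂ t : ℕ} (h : x₂ < x₁) (hx : x₁ ≤ n) :
    ordA n (x₁, t) < ordA n (x₂, t) := by
  show t * (n + 1) + (n - x₁) < t * (n + 1) + (n - x₂)
  omega

lemma xiOf_spec {B : Finset (ℕ × ℕ)} (hB : B ⊆ placesA n) (hne : B.Nonempty) :
    xiOf n B ∈ B ∧ ∀ p ∈ B, ordA n (xiOf n B) ≤ ordA n p := by
  obtain ⟨p₀, hp₀, hmin⟩ := B.exists_min_image (ordA n) hne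
  have himg : (B.image (ordA n)).min = (ordA n p₀ : WithTop ℕ) := by
    apply le_antisymm
    · exact Finset.min_le (Finset.mem_image_of_mem _ hp₀)
    · apply Finset.le_min
      intro y hy
      obtain ⟨q, hq, rfl⟩ := Finset.mem_image.mp hy
      exact WithTop.coe_le_coe.mpr (hmin q hq)
  have hp₀A := mem_placesA.mp (hB hp₀)
  have hx : xiOf n B = p₀ := by
    unfold xiOf
    rw [himg]
    have hun : (WithTop.untopD 0 (ordA n p₀ : WithTop ℕ)) = ordA n p₀ := rfl
    simp only [hun]
    have hord : ordA n p₀ = p₀.2 * (n + 1) + (n - p₀.1) := rfl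
    have hlt : n - p₀.1 < n + 1 := by omega
    have hmod : (p₀.2 * (n + 1) + (n - p₀.1)) % (n + 1) = n - p₀.1 := by
      rw [mul_comm p₀.2 (n + 1), Nat.mul_add_mod]
      exact Nat.mod_eq_of_lt hlt
    have hdiv : (p₀.2 * (n + 1) + (n - p₀.1)) / (n + 1) = p₀.2 := by
      rw [mul_comm p₀.2 (n + 1), Nat.mul_add_div (by omega)]
      have h0 : (n - p₀.1) / (n + 1) = 0 := Nat.div_eq_of_lt hlt
      omega
    rw [hord, hmod, hdiv]
    have h1 : n - (n - p₀.1) = p₀.1 := by omega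
    rw [h1]
  rw [hx]
  exact ⟨hp₀, hmin⟩

lemma Bset_of_pos {y : ℕ} (hy : 1 ≤ y) :
    Bset n M y = Bset n M (y - 1) \
      insert (xiOf n (Bset n M (y - 1)))
        (minusSet n (Bset n M (y - 1)) ∪ plusSet n (Bset n M (y - 1))) := by
  obtain ⟨y', rfl⟩ : ∃ y', y = y' + 1 := ⟨y - 1, by omega⟩
  simp [Bset]

lemma not_mem_of_removed {y : ℕ} {p : ℕ × ℕ} (hy : 1 ≤ y)
    (h : p = xiOf n (Bset n M (y - 1)) ∨ p ∈ minusSet n (Bset n M (y - 1)) ∨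
      p ∈ plusSet n (Bset n M (y - 1))) : p ∉ Bset n M y := by
  rw [Bset_of_pos hy, Finset.mem_sdiff]
  rintro ⟨-, hc⟩
  apply hc
  rw [Finset.mem_insert, Finset.mem_union]
  tauto

lemma death_cases {y : ℕ} {q : ℕ × ℕ} (hy : 1 ≤ y) (h1 : q ∈ Bset n M (y - 1))
    (h2 : q ∉ Bset n M y) :
    q = xiOf n (Bset n M (y - 1)) ∨ q ∈ minusSet n (Bset n M (y - 1)) ∨
      q ∈ plusSet n (Bset n M (y - 1)) := by
  rw [Bset_of_pos hy, Finset.mem_sdiff] at h2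
  push_neg at h2
  have := h2 h1
  rw [Finset.mem_insert, Finset.mem_union] at this
  tauto

lemma mem_succ_of_not_removed {y : ℕ} {p : ℕ × ℕ} (hy : 1 ≤ y)
    (hp : p ∈ Bset n M (y - 1))
    (h1 : p ≠ xiOf n (Bset n M (y - 1)))
    (h2 : p ∉ minusSet n (Bset n M (y - 1)))
    (h3 : p ∉ plusSet n (Bset n M (y - 1))) : p ∈ Bset n M y := by
  rw [Bset_of_pos hy, Finset.mem_sdiff]
  refine ⟨hp, ?_⟩
  rw [Finset.mem_insert, Finset.mem_union]
  tauto

lemma exists_death {q : ℕ × ℕ} {m₁ : ℕ} : ∀ {m₂ : ℕ}, q ∈ Bset n M m₁ → q ∉ Bset n M m₂ →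
    ∃ y, m₁ < y ∧ y ≤ m₂ ∧ q ∈ Bset n M (y - 1) ∧ q ∉ Bset n M y := by
  intro m₂
  induction m₂ with
  | zero => intro h1 h2; exact absurd (Bset_antitone (Nat.zero_le m₁) h1) h2
  | succ m ih =>
    intro h1 h2
    by_cases hq : q ∈ Bset n M m
    · have hm : m₁ ≤ m := by
        by_contra hcon
        exact h2 (Bset_antitone (by omega) h1)
      exact ⟨m + 1, by omega, le_rfl, by simpa using hq, h2⟩
    · obtain ⟨y, hy1, hy2, h3, h4⟩ := ih h1 hq
      exact ⟨y, hy1, by omega, h3, h4⟩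

lemma mem_minusSet {B : Finset (ℕ × ℕ)} {p : ℕ × ℕ} :
    p ∈ minusSet n B ↔ p ∈ B ∧ p.1 = (xiOf n B).1 ∧ (xiOf n B).2 < p.2 ∧
      p.2 < (xiOf n B).1 ∧ (p.2, (xiOf n B).2) ∈ B := by
  unfold minusSet
  rw [Finset.mem_filter]

lemma mem_plusSet {B : Finset (ℕ × ℕ)} {p : ℕ × ℕ} :
    p ∈ plusSet n B ↔ p ∈ B ∧ p.2 = (xiOf n B).2 ∧ (xiOf n B).2 < p.1 ∧
      p.1 < (xiOf n B).1 ∧ ((xiOf n B).1, p.1) ∈ B := by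
  unfold plusSet
  rw [Finset.mem_filter]


lemma not_mem_succ_of_minus {m : ℕ} {p : ℕ × ℕ} (h : p ∈ minusSet n (Bset n M m)) :
    p ∉ Bset n M (m + 1) := by
  intro hc
  have : p ∈ Bset n M m \ insert (xiOf n (Bset n M m))
      (minusSet n (Bset n M m) ∪ plusSet n (Bset n M m)) := hc
  rw [Finset.mem_sdiff, Finset.mem_insert, Finset.mem_union] at this
  exact this.2 (Or.inr (Or.inl h))

lemma not_mem_succ_of_plus {m : ℕ} {p : ℕ × ℕ} (h : p ∈ plusSet n (Bset n M m)) :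
    p ∉ Bset n M (m + 1) := by
  intro hc
  have : p ∈ Bset n M m \ insert (xiOf n (Bset n M m))
      (minusSet n (Bset n M m) ∪ plusSet n (Bset n M m)) := hc
  rw [Finset.mem_sdiff, Finset.mem_insert, Finset.mem_union] at this
  exact this.2 (Or.inr (Or.inr h))


lemma not_mem_succ_of_xi {m : ℕ} : xiOf n (Bset n M m) ∉ Bset n M (m + 1) := by
  intro hc
  have h : xiOf n (Bset n M m) ∈ Bset n M m \ insert (xiOf n (Bset n M m))
      (minusSet n (Bset n M m) ∪ plusSet n (Bset n M m)) := hc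
  rw [Finset.mem_sdiff, Finset.mem_insert] at h
  exact h.2 (Or.inl rfl)

lemma mem_placesA' {x y : ℕ} : (x, y) ∈ placesA n ↔ x ≤ n ∧ 1 ≤ y ∧ y < x :=
  mem_placesA

lemma mem_minusSet' {B : Finset (ℕ × ℕ)} {x y : ℕ} :
    (x, y) ∈ minusSet n B ↔ (x, y) ∈ B ∧ x = (xiOf n B).1 ∧ (xiOf n B).2 < y ∧
      y < (xiOf n B).1 ∧ (y, (xiOf n B).2) ∈ B :=
  mem_minusSet

lemma mem_plusSet' {B : Finset (ℕ × ℕ)} {x y : ℕ} :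
    (x, y) ∈ plusSet n B ↔ (x, y) ∈ B ∧ y = (xiOf n B).2 ∧ (xiOf n B).2 < x ∧
      x < (xiOf n B).1 ∧ ((xiOf n B).1, x) ∈ B :=
  mem_plusSet

/-- The key invariant: the set of unfilled places is "transitively closed modulo M". -/
lemma I9 (hM : IsIdealSet n M) :
    ∀ m, ∀ w t b : ℕ, (w, t) ∈ Bset n M m → (b, w) ∈ Bset n M m →
      (b, t) ∈ Bset n M m ∨ (b, t) ∈ M := by
  intro m
  induction m with
  | zero =>
    intro w t b h1 h2
    obtain ⟨hA1a, hA1b, hA1c⟩ := mem_placesA.mp (Bset_subset_placesA 0 h1)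
    obtain ⟨hA2a, hA2b, hA2c⟩ := mem_placesA.mp (Bset_subset_placesA 0 h2)
    simp only at hA1a hA1b hA1c hA2a hA2b hA2c
    by_cases hbt : (b, t) ∈ M
    · exact Or.inr hbt
    · left
      show (b, t) ∈ placesA n \ M
      rw [Finset.mem_sdiff]
      exact ⟨mem_placesA.mpr ⟨hA2a, hA1b, by omega⟩, hbt⟩
  | succ m ih =>
    intro w t b h1 h2
    have h1m : (w, t) ∈ Bset n M m := Bset_succ_subset m h1
    have h2m : (b, w) ∈ Bset n M m := Bset_succ_subset m h2
    rcases ih w t b h1m h2m with hbt | hbt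
    swap
    · exact Or.inr hbt
    by_cases hbt1 : (b, t) ∈ Bset n M (m + 1)
    · exact Or.inl hbt1
    exfalso
    have hne : (Bset n M m).Nonempty := ⟨_, h1m⟩
    obtain ⟨hξmem, hξmin⟩ := xiOf_spec (Bset_subset_placesA m) hne
    obtain ⟨hA1a, hA1b, hA1c⟩ := mem_placesA.mp (Bset_subset_placesA m h1m)
    obtain ⟨hA2a, hA2b, hA2c⟩ := mem_placesA.mp (Bset_subset_placesA m h2m)
    simp only at hA1a hA1b hA1c hA2a hA2b hA2c
    have hrm := death_cases (n := n) (M := M) (y := m + 1) (by omega)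
      (by simpa using hbt) hbt1
    simp only [Nat.add_sub_cancel] at hrm
    rcases hrm with hξ | hmin | hplus
    · -- (b,t) = ξ : then (b,w) is a minus, contradiction with h2
      refine not_mem_succ_of_minus ?_ h2
      rw [mem_minusSet, ← hξ]
      exact ⟨h2m, rfl, by omega, by omega, h1m⟩
    · -- (b,t) ∈ minusSet : ξ = (b, c), c < t, (t,c) ∈ B
      rw [mem_minusSet] at hmin
      obtain ⟨-, hb1, hc2, -, htc⟩ := hmin
      simp only at hb1 hc2 htc
      rcases ih t (xiOf n (Bset n M m)).2 w htc h1m with hwc | hwc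
      · -- (w,c) alive : (b,w) would be a minus
        refine not_mem_succ_of_minus ?_ h2
        rw [mem_minusSet]
        exact ⟨h2m, hb1, by omega, by omega, hwc⟩
      · -- (w,c) ∈ M : then ξ = (b,c) ∈ M, contradiction
        have hbc : ((b : ℕ), (xiOf n (Bset n M m)).2) ∈ M :=
          hM.2.2 _ hwc b (by omega) (by omega)
        have hpair : xiOf n (Bset n M m) = (b, (xiOf n (Bset n M m)).2) := by
          rw [hb1]
        rw [← hpair] at hbc
        exact not_mem_M_of_mem_Bset hξmem hbc
    · -- (b,t) ∈ plusSet : ξ = (r, t), b < r, (r,b) ∈ B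
      rw [mem_plusSet] at hplus
      obtain ⟨-, ht2, -, hbr, hrb⟩ := hplus
      simp only at ht2 hbr hrb
      rcases ih b w (xiOf n (Bset n M m)).1 h2m hrb with hrw | hrw
      · -- (r,w) alive : (w,t) would be a plus
        refine not_mem_succ_of_plus ?_ h1
        rw [mem_plusSet]
        exact ⟨h1m, ht2, by omega, by omega, hrw⟩
      · -- (r,w) ∈ M : then ξ = (r,t) ∈ M, contradiction
        have hrt : ((xiOf n (Bset n M m)).1, t) ∈ M :=
          hM.2.1 _ hrw t (by omega) (by omega)
        have hpair : xiOf n (Bset n M m) = ((xiOf n (Bset n M m)).1, t) := by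
          rw [ht2]
        rw [← hpair] at hrt
        exact not_mem_M_of_mem_Bset hξmem hrt

end Aux

/-- **Lemma 2, point 1.**  If `(k,b) ∈ C_i⁻` and `(a,k) ∈ C_l⁻` for some `l < i`
(with `a > k > b`), then `(a,b) ∈ C_m⁻` for some `m < i`. -/
theorem lemma2_point1 (K : Type*) [Field K] [CharZero K]
    (n s : ℕ) (hn : 2 ≤ n) (M : Finset (ℕ × ℕ))
    (hM : IsIdealSet n M) (hs : IsNumSteps n M s)
    (i l : ℕ) (hi1 : 1 ≤ i) (his : i ≤ s) (hl1 : 1 ≤ l) (hli : l < i)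
    (k a b : ℕ) (hak : a > k) (hkb : k > b)
    (h1 : (k, b) ∈ Cminus n M i) (h2 : (a, k) ∈ Cminus n M l) :
    ∃ m, 1 ≤ m ∧ m < i ∧ (a, b) ∈ Cminus n M m := by
  have hBisubBl1 : Bset n M (i - 1) ⊆ Bset n M (l - 1) := Bset_antitone (by omega)
  have hBisubBl : Bset n M (i - 1) ⊆ Bset n M l := Bset_antitone (by omega)
  rw [Cminus, mem_minusSet'] at h1 h2
  obtain ⟨hkbBi, hk_eq, hti_lt_b, hb_lt_xi1, hbtiBi⟩ := h1
  obtain ⟨hakBl, ha_eq, htl_lt_k, hk_lt_xl1, hktlBl⟩ := h2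
  set ξi := xiOf n (Bset n M (i - 1)) with hξidef
  set ξl := xiOf n (Bset n M (l - 1)) with hξldef
  have hξi_pair : ξi = (k, ξi.2) := by rw [hk_eq]
  have hξl_pair : ξl = (a, ξl.2) := by rw [ha_eq]
  have hBine : (Bset n M (i - 1)).Nonempty := ⟨_, hkbBi⟩
  have hBlne : (Bset n M (l - 1)).Nonempty := ⟨_, hakBl⟩
  obtain ⟨hξi_mem, hξi_min⟩ := xiOf_spec (Bset_subset_placesA (i - 1)) hBine
  obtain ⟨hξl_mem, hξl_min⟩ := xiOf_spec (Bset_subset_placesA (l - 1)) hBlne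
  rw [← hξidef] at hξi_mem hξi_min
  rw [← hξldef] at hξl_mem hξl_min
  -- bounds from placesA
  obtain ⟨hkn, hb1, _⟩ := mem_placesA'.mp (Bset_subset_placesA _ hkbBi)
  obtain ⟨hbn, hti1, htib⟩ := mem_placesA'.mp (Bset_subset_placesA _ hbtiBi)
  obtain ⟨han, _, _⟩ := mem_placesA'.mp (Bset_subset_placesA _ hakBl)
  obtain ⟨_, htl1, _⟩ := mem_placesA'.mp (Bset_subset_placesA _ hktlBl)
  -- Step 1 : (k, ξl.2) dies at step l (as a plus)
  have hktl_plus : ((k : ℕ), ξl.2) ∈ plusSet n (Bset n M (l - 1)) := by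
    rw [mem_plusSet', ← hξldef]
    refine ⟨hktlBl, rfl, htl_lt_k, hk_lt_xl1, ?_⟩
    rw [← ha_eq]; exact hakBl
  have hktl_dead : ((k : ℕ), ξl.2) ∉ Bset n M l := by
    have h := not_mem_succ_of_plus (m := l - 1) hktl_plus
    rwa [show l - 1 + 1 = l by omega] at h
  -- Step 2 : ξi.2 ≠ ξl.2
  have hξiBl : ξi ∈ Bset n M l := hBisubBl hξi_mem
  have htine : ξi.2 ≠ ξl.2 := by
    intro he
    apply hktl_dead
    have h : ξi = (k, ξl.2) := by rw [hξi_pair, he]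
    rwa [h] at hξiBl
  -- Step 3 : ξl.2 < ξi.2
  have htlti : ξl.2 < ξi.2 := by
    rcases Nat.lt_trichotomy ξl.2 ξi.2 with h | h | h
    · exact h
    · exact absurd h.symm htine
    · exfalso
      have h2' : ordA n (k, ξi.2) < ordA n (a, ξl.2) := ordA_lt_col h hkn
      have h1' : ordA n ξl ≤ ordA n (k, ξi.2) := by
        have := hξl_min _ (hBisubBl1 hξi_mem)
        rwa [← hξi_pair]
      rw [hξl_pair] at h1'
      omega
  -- Step 4 : (a, b) is unfilled at time l - 1
  have habBl : ((a : ℕ), b) ∈ Bset n M (l - 1) := by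
    rcases I9 hM (l - 1) k b a (hBisubBl1 hkbBi) hakBl with h | h
    · exact h
    · exfalso
      have hm : ((a : ℕ), ξl.2) ∈ M := hM.2.1 _ h ξl.2 htl1 (by omega)
      apply not_mem_M_of_mem_Bset hξl_mem
      rwa [hξl_pair]
  -- Step 5 : (a, ξi.2) is unfilled at time l - 1
  have hatiBl1 : ((a : ℕ), ξi.2) ∈ Bset n M (l - 1) := by
    rcases I9 hM (l - 1) b ξi.2 a (hBisubBl1 hbtiBi) habBl with h | h
    · exact h
    · exfalso
      have hm : ((a : ℕ), ξl.2) ∈ M := hM.2.1 _ h ξl.2 htl1 (by omega)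
      apply not_mem_M_of_mem_Bset hξl_mem
      rwa [hξl_pair]
  -- Step 6 : main case split on (b, ξl.2)
  by_cases hbtl : ((b : ℕ), ξl.2) ∈ Bset n M (l - 1)
  · -- (a, b) gets a minus at step l
    refine ⟨l, hl1, hli, ?_⟩
    rw [Cminus, mem_minusSet', ← hξldef]
    exact ⟨habBl, ha_eq, by omega, by omega, hbtl⟩
  -- Step 7 : (ξi.2, ξl.2) is dead at time l - 1
  have htitl_dead : ((ξi.2 : ℕ), ξl.2) ∉ Bset n M (l - 1) := by
    intro hc
    rcases I9 hM (l - 1) ξi.2 ξl.2 b hc (hBisubBl1 hbtiBi) with h | h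
    · exact hbtl h
    · exact not_mem_M_of_mem_Bset hktlBl (hM.2.2 _ h k hkb hkn)
  -- Step 8 : (a, ξi.2) survives step l
  have hatiBl : ((a : ℕ), ξi.2) ∈ Bset n M l := by
    have h := mem_succ_of_not_removed (n := n) (M := M) (y := l) hl1 hatiBl1
      (by
        rw [← hξldef, hξl_pair]
        intro hc
        have hc2 := congrArg Prod.snd hc
        exact htine hc2)
      (by
        rw [mem_minusSet', ← hξldef]
        rintro ⟨-, -, -, -, hc⟩
        exact htitl_dead hc)
      (by
        rw [mem_plusSet', ← hξldef]
        rintro ⟨-, hc, -, -, -⟩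
        exact htine hc)
    exact h
  -- Step 9 : (a, ξi.2) is dead at time i - 1
  have hatiBi : ((a : ℕ), ξi.2) ∉ Bset n M (i - 1) := by
    intro hc
    have h1' : ordA n ξi ≤ ordA n (a, ξi.2) := hξi_min _ hc
    have h2' : ordA n (a, ξi.2) < ordA n (k, ξi.2) := ordA_lt_row hak han
    have heq : ordA n ξi = ordA n (k, ξi.2) := congrArg (ordA n) hξi_pair
    omega
  -- Step 10 : find the death step y of (a, ξi.2)
  obtain ⟨y, hly, hyi, hatiBy1, hatiBy⟩ := exists_death hatiBl hatiBi
  have hy1 : 1 ≤ y := by omega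
  have hBy1subBl1 : Bset n M (y - 1) ⊆ Bset n M (l - 1) := Bset_antitone (by omega)
  have hBisubBy1 : Bset n M (i - 1) ⊆ Bset n M (y - 1) := Bset_antitone (by omega)
  have hBisubBy : Bset n M (i - 1) ⊆ Bset n M y := Bset_antitone (by omega)
  -- Step 11 : case split on whether (a,b) is still unfilled at time y - 1
  by_cases hab : ((a : ℕ), b) ∈ Bset n M (y - 1)
  · -- (a,b) unfilled at y-1 : analyze how (a, ξi.2) dies at step y
    have hcases := death_cases hy1 hatiBy1 hatiBy
    set ξy := xiOf n (Bset n M (y - 1)) with hξydef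
    have hByne : (Bset n M (y - 1)).Nonempty := ⟨_, hatiBy1⟩
    obtain ⟨hξy_mem, hξy_min⟩ := xiOf_spec (Bset_subset_placesA (y - 1)) hByne
    rw [← hξydef] at hξy_mem hξy_min
    have hbtiBy1 : ((b : ℕ), ξi.2) ∈ Bset n M (y - 1) := hBisubBy1 hbtiBi
    rcases hcases with hY1 | hY2 | hY3
    · -- Y1 : ξy = (a, ξi.2); then (a,b) ∈ C_y⁻
      refine ⟨y, hy1, by omega, ?_⟩
      rw [Cminus, mem_minusSet', ← hξydef, ← hY1]
      exact ⟨hab, rfl, by omega, by omega, hbtiBy1⟩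
    · -- Y2 : (a, ξi.2) ∈ minusSet; ξy = (a, g) with g < ξi.2, (ξi.2, g) unfilled
      rw [mem_minusSet', ← hξydef] at hY2
      obtain ⟨-, hay1, hg_lt, -, htigBy1⟩ := hY2
      have hξy_pair : ξy = (a, ξy.2) := by rw [hay1]
      -- ξl.2 < ξy.2
      have htl_le_g : ξl.2 ≤ ξy.2 := by
        by_contra hcon
        push_neg at hcon
        have h2' : ordA n (a, ξy.2) < ordA n (a, ξl.2) := ordA_lt_col hcon han
        have h1' : ordA n ξl ≤ ordA n (a, ξy.2) := by
          have := hξl_min _ (hBy1subBl1 hξy_mem)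
          rwa [← hξy_pair]
        rw [hξl_pair] at h1'
        omega
      have htl_ne_g : ξl.2 ≠ ξy.2 := by
        intro he
        have hxeq : ξy = ξl := by rw [hξy_pair, hξl_pair, he]
        have hξl_dead : ξl ∉ Bset n M l := by
          have h := not_mem_succ_of_xi (n := n) (M := M) (m := l - 1)
          rw [← hξldef] at h
          rwa [show l - 1 + 1 = l by omega] at h
        apply hξl_dead
        rw [← hxeq]
        exact Bset_antitone (by omega) hξy_mem
      -- (b, ξy.2) unfilled at y - 1
      have hbgBy1 : ((b : ℕ), ξy.2) ∈ Bset n M (y - 1) := by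
        rcases I9 hM (y - 1) ξi.2 ξy.2 b htigBy1 hbtiBy1 with h | h
        · exact h
        · exfalso
          have hkg : ((k : ℕ), ξy.2) ∈ M := hM.2.2 _ h k hkb hkn
          have hktl : ((k : ℕ), ξl.2) ∈ M := hM.2.1 _ hkg ξl.2 htl1 (by omega)
          exact not_mem_M_of_mem_Bset hktlBl hktl
      refine ⟨y, hy1, by omega, ?_⟩
      rw [Cminus, mem_minusSet', ← hξydef]
      exact ⟨hab, hay1, by omega, by omega, hbgBy1⟩
    · -- Y3 : (a, ξi.2) ∈ plusSet; ξy = (f, ξi.2) with a < f, (f, a) unfilled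
      exfalso
      rw [mem_plusSet', ← hξydef] at hY3
      obtain ⟨-, hti_eq, -, ha_lt_f, hfaBy1⟩ := hY3
      have hξy_pair : ξy = (ξy.1, ξi.2) := by rw [hti_eq]
      -- (ξy.1, b) unfilled at y - 1
      have hfbBy1 : ((ξy.1 : ℕ), b) ∈ Bset n M (y - 1) := by
        rcases I9 hM (y - 1) a b ξy.1 hab hfaBy1 with h | h
        · exact h
        · exfalso
          have hm : ((ξy.1 : ℕ), ξi.2) ∈ M := hM.2.1 _ h ξi.2 hti1 (by omega)
          apply not_mem_M_of_mem_Bset hξy_mem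
          rwa [hξy_pair]
      -- then (b, ξi.2) is a plus at step y, contradicting (b, ξi.2) ∈ B (i-1) ⊆ B y
      have hbplus : ((b : ℕ), ξi.2) ∈ plusSet n (Bset n M (y - 1)) := by
        rw [mem_plusSet', ← hξydef]
        exact ⟨hbtiBy1, hti_eq, by omega, by omega, hfbBy1⟩
      have hdead : ((b : ℕ), ξi.2) ∉ Bset n M y := by
        have h := not_mem_succ_of_plus (m := y - 1) hbplus
        rwa [show y - 1 + 1 = y by omega] at h
      exact hdead (hBisubBy hbtiBi)
  · -- (a,b) died before time y - 1 : it must have died as a minus (our goal)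
    obtain ⟨w, hlw, hwy, habBw1, habBw⟩ := exists_death habBl hab
    have hw1 : 1 ≤ w := by omega
    have hatiBw1 : ((a : ℕ), ξi.2) ∈ Bset n M (w - 1) :=
      Bset_antitone (by omega) hatiBy1
    have hcases := death_cases hw1 habBw1 habBw
    set ξw := xiOf n (Bset n M (w - 1)) with hξwdef
    have hBwne : (Bset n M (w - 1)).Nonempty := ⟨_, habBw1⟩
    obtain ⟨hξw_mem, hξw_min⟩ := xiOf_spec (Bset_subset_placesA (w - 1)) hBwne
    rw [← hξwdef] at hξw_mem hξw_min
    rcases hcases with hW1 | hW2 | hW3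
    · exfalso
      have h1' : ordA n ξw ≤ ordA n (a, ξi.2) := hξw_min _ hatiBw1
      have h2' : ordA n (a, ξi.2) < ordA n (a, b) := ordA_lt_col hti_lt_b han
      rw [← hW1] at h1'
      omega
    · exact ⟨w, hw1, by omega, by rw [Cminus]; exact hW2⟩
    · exfalso
      rw [mem_plusSet', ← hξwdef] at hW3
      obtain ⟨-, hb_eq, -, ha_lt, -⟩ := hW3
      have hξw_pair : ξw = (ξw.1, b) := by rw [hb_eq]
      have h1' : ordA n ξw ≤ ordA n (a, ξi.2) := hξw_min _ hatiBw1
      have h2' : ordA n (a, ξi.2) < ordA n (ξw.1, b) := ordA_lt_col hti_lt_b han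
      rw [hξw_pair] at h1'
      omega

end Panov
end
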